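/- Let p ≥ 5 be a prime, let k be a field of characteristic p, and let a, b, λ ∈ k. Suppose there exists a rational function Z₀ ∈ k(x) whose derivative equals (the image in k(x) of) the polynomial λ·(x³ + a·x + b)^{(p-1)/2} − x^{p-1}. Then λ·H(a,b) = 1, where H(a,b) denotes the coefficient of x^{p-1} in (x³ + a·x + b)^{(p-1)/2} ∈ k[x]; in particular H(a,b) ≠ 0. -/

import Mathlib

open Polynomial

lemma coeff_pminus1_of_deriv (p : ℕ) (hp : p.Prime)
    (k : Type*) [Field k] [CharP k p] (g n d : k[X]) (hd : d ≠ 0)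
    (hN : derivative (n * d ^ (p - 1)) = g * d ^ p)
    (hdeg : g.natDegree < 2 * p - 1) : g.coeff (p - 1) = 0 := by
  have hp1 : 1 < p := hp.one_lt
  have hppos : 0 < p := hp.pos
  set nd := d.natDegree with hnd
  set t := p - 1 + p * nd with ht
  -- LHS coefficient vanishes
  have hL : (derivative (n * d ^ (p - 1))).coeff t = 0 := by
    rw [coeff_derivative]
    have h1 : t + 1 = p * (nd + 1) := by rw [Nat.mul_succ]; omega
    have h2 : ((t : k) + 1) = 0 := by
      rw [← Nat.cast_one, ← Nat.cast_add, h1, Nat.cast_mul, CharP.cast_eq_zero k p, zero_mul]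
    rw [h2, mul_zero]
  -- coefficient of d^p
  have hdp : ∀ j : ℕ, (d ^ p).coeff j =
      (if p ∣ j then d.coeff (j / p) else 0) ^ p := by
    intro j
    haveI : ExpChar k p := .prime hp
    rw [← map_frobenius_expand, coeff_map, coeff_expand hppos]
    simp [frobenius_def]
  -- RHS coefficient
  have hR : (g * d ^ p).coeff t = g.coeff (p - 1) * (d.coeff nd) ^ p := by
    rw [coeff_mul]
    rw [Finset.sum_eq_single ((p - 1, p * nd) : ℕ × ℕ)]
    · rw [hdp, if_pos (dvd_mul_right p nd), Nat.mul_div_cancel_left _ hppos]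
    · rintro ⟨i, j⟩ hmem hne
      rw [Finset.HasAntidiagonal.mem_antidiagonal] at hmem
      simp only at hmem ⊢
      rw [hdp]
      by_cases hdvd : p ∣ j
      · obtain ⟨l, rfl⟩ := hdvd
        rcases lt_trichotomy l nd with hl | hl | hl
        · have : p * (l + 1) ≤ p * nd := Nat.mul_le_mul_left p hl
          rw [Nat.mul_succ] at this
          have hi : 2 * p - 1 ≤ i := by omega
          rw [coeff_eq_zero_of_natDegree_lt (lt_of_lt_of_le hdeg hi), zero_mul]
        · subst hl
          exfalso
          apply hne
          have : i = p - 1 := by omega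
          rw [this]
        · have : p * (nd + 1) ≤ p * l := Nat.mul_le_mul_left p hl
          rw [Nat.mul_succ] at this
          have : nd < p * l / p := by
            rw [Nat.mul_div_cancel_left _ hppos]; omega
          rw [if_pos (dvd_mul_right p l), coeff_eq_zero_of_natDegree_lt this,
            zero_pow hppos.ne', mul_zero]
      · rw [if_neg hdvd, zero_pow hppos.ne', mul_zero]
    · intro hmem
      exfalso
      exact hmem (Finset.HasAntidiagonal.mem_antidiagonal.mpr rfl)
  have := hL.symm.trans (by rw [hN, hR])
  have hlead : d.coeff nd ≠ 0 := mt leadingCoeff_eq_zero.mp hd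
  have : g.coeff (p - 1) * (d.coeff nd) ^ p = 0 := this.symm
  rcases mul_eq_zero.mp this with h | h
  · exact h
  · exact absurd (pow_eq_zero_iff hppos.ne' |>.mp h) hlead

/-- The derivative of the rational function `n / d` (with `d ≠ 0`) equals a polynomial `g`
iff `n' * d - n * d' = g * d ^ 2` by the quotient rule; we encode "there exists a rational
function `Z₀ ∈ k(x)` with derivative `g`" via such a representation. -/
theorem eigenvalue_is_inverse_Hasse_mod_p
    (p : ℕ) (hp : p.Prime) (hp5 : 5 ≤ p)
    (k : Type*) [Field k] [CharP k p] (a b lam : k)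
    (hZ : ∃ n d : k[X], d ≠ 0 ∧
      derivative n * d - n * derivative d =
        (C lam * ((X : k[X]) ^ 3 + C a * X + C b) ^ ((p - 1) / 2) - (X : k[X]) ^ (p - 1))
          * d ^ 2) :
    lam * ((((X : k[X]) ^ 3 + C a * X + C b) ^ ((p - 1) / 2)).coeff (p - 1)) = 1 ∧
      (((X : k[X]) ^ 3 + C a * X + C b) ^ ((p - 1) / 2)).coeff (p - 1) ≠ 0 := by
  obtain ⟨n, d, hd, heq⟩ := hZ
  have hppos : 0 < p := hp.pos
  set f : k[X] := (X : k[X]) ^ 3 + C a * X + C b with hf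
  set m := (p - 1) / 2 with hm
  set g : k[X] := C lam * f ^ m - X ^ (p - 1) with hg
  -- derivative identity
  have hder : derivative (n * d ^ (p - 1)) = g * d ^ p := by
    rw [derivative_mul, derivative_pow]
    have hcast : ((p - 1 : ℕ) : k) = -1 := by
      rw [Nat.cast_sub hp.one_le, CharP.cast_eq_zero k p, Nat.cast_one, zero_sub]
    rw [hcast, map_neg, map_one]
    have hsplit : p - 1 = (p - 2) + 1 := by omega
    have hsplit2 : p = (p - 2) + 2 := by omega
    calc derivative n * d ^ (p - 1) + n * (-1 * d ^ (p - 1 - 1) * derivative d)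
        = d ^ (p - 2) * (derivative n * d - n * derivative d) := by
          rw [hsplit]
          simp only [Nat.add_sub_cancel]
          ring
      _ = d ^ (p - 2) * (g * d ^ 2) := by rw [heq]
      _ = g * d ^ (2 + (p - 2)) := by rw [pow_add]; ring
      _ = g * d ^ p := by rw [show 2 + (p - 2) = p by omega]
  -- degree bound
  have hmle : 3 * m < 2 * p - 1 := by rw [hm]; omega
  have hdeg : g.natDegree < 2 * p - 1 := by
    have hf3 : f.natDegree ≤ 3 := by rw [hf]; compute_degree
    have h1 : (C lam * f ^ m).natDegree ≤ 3 * m := by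
      refine (natDegree_C_mul_le _ _).trans (natDegree_pow_le.trans ?_)
      calc m * f.natDegree ≤ m * 3 := Nat.mul_le_mul_left m hf3
        _ = 3 * m := by ring
    have h2 : ((X : k[X]) ^ (p - 1)).natDegree ≤ p - 1 := by simp
    refine lt_of_le_of_lt (natDegree_sub_le _ _) ?_
    rw [max_lt_iff]
    exact ⟨lt_of_le_of_lt h1 hmle, lt_of_le_of_lt h2 (by omega)⟩
  have hkey : g.coeff (p - 1) = 0 := coeff_pminus1_of_deriv p hp k g n d hd hder hdeg
  rw [hg, coeff_sub, coeff_C_mul, coeff_X_pow, if_pos rfl, sub_eq_zero] at hkey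
  refine ⟨hkey, fun h => ?_⟩
  rw [h, mul_zero] at hkey
  exact one_ne_zero hkey.symm
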